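/- Let T be an n×n unitary matrix, let f: ℂ^{n−1} → ℂⁿ be the inclusion onto the first n−1 coordinates, and let A₀ be an (n−1)×(n−1) unitary matrix such that ‖T₀ − A₀‖_F ≤ 1, where T₀ is the top-left (n−1)×(n−1) corner of T. Then ‖T^{−1} ∘ f ∘ A₀ − f‖_F ≤ 2. -/

import Mathlib

open Matrix Finset

/-- The Frobenius norm of a (possibly non-square) complex matrix. -/
noncomputable def frobNorm {m n : Type*} [Fintype m] [Fintype n]
    (M : Matrix m n ℂ) : ℝ :=
  Real.sqrt ((Matrix.trace (Mᴴ * M)).re)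

lemma frob_sq {m k : Type*} [Fintype m] [Fintype k] (M : Matrix m k ℂ) :
    frobNorm M = Real.sqrt (∑ i, ∑ j, Complex.normSq (M i j)) := by
  unfold frobNorm
  congr 1
  rw [Matrix.trace]
  simp only [Matrix.diag_apply, Matrix.mul_apply, Matrix.conjTranspose_apply]
  rw [Complex.re_sum, Finset.sum_comm]
  refine Finset.sum_congr rfl fun j _ => ?_
  rw [Complex.re_sum]
  refine Finset.sum_congr rfl fun i _ => ?_
  simp [Complex.normSq_apply, Complex.mul_re]

/-- If `T` is an `(n+1)×(n+1)` unitary matrix, `f` is the inclusion of `ℂⁿ`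
onto the first `n` coordinates, and `A₀` is an `n×n` unitary matrix with
`‖T₀ − A₀‖_F ≤ 1` (where `T₀` is the top-left corner of `T`), then
`‖T⁻¹ ∘ f ∘ A₀ − f‖_F ≤ 2`. -/
theorem stmt4 (n : ℕ) (T : Matrix (Fin (n + 1)) (Fin (n + 1)) ℂ)
    (hT : T ∈ Matrix.unitaryGroup (Fin (n + 1)) ℂ)
    (A₀ : Matrix (Fin n) (Fin n) ℂ) (hA₀ : A₀ ∈ Matrix.unitaryGroup (Fin n) ℂ)
    (f : Matrix (Fin (n + 1)) (Fin n) ℂ)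
    (hf : f = fun i j => if i = j.castSucc then 1 else 0)
    (hclose : frobNorm (T.submatrix Fin.castSucc Fin.castSucc - A₀) ≤ 1) :
    frobNorm (T⁻¹ * f * A₀ - f) ≤ 2 := by
  have h1 : Tᴴ * T = 1 := by
    simpa [Matrix.star_eq_conjTranspose] using hT.1
  have h2 : T * Tᴴ = 1 := by
    simpa [Matrix.star_eq_conjTranspose] using hT.2
  have hTinv : T⁻¹ = Tᴴ := Matrix.inv_eq_right_inv h2
  set N : Matrix (Fin (n + 1)) (Fin n) ℂ := f * A₀ - T * f with hNdef
  have hM : T⁻¹ * f * A₀ - f = Tᴴ * N := by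
    rw [hTinv, hNdef, Matrix.mul_sub, ← Matrix.mul_assoc, ← Matrix.mul_assoc, h1, Matrix.one_mul]
  have hfrob : frobNorm (Tᴴ * N) = frobNorm N := by
    unfold frobNorm
    congr 3
    rw [Matrix.conjTranspose_mul, Matrix.conjTranspose_conjTranspose, Matrix.mul_assoc,
      ← Matrix.mul_assoc T, h2, Matrix.one_mul]
  rw [hM, hfrob, frob_sq]
  -- entries of N
  have hNc : ∀ (i : Fin n) (j : Fin n),
      N i.castSucc j = -(T.submatrix Fin.castSucc Fin.castSucc - A₀) i j := by
    intro i j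
    simp only [hNdef, Matrix.sub_apply, Matrix.mul_apply]
    simp [hf, Fin.castSucc_inj]
  have hNl : ∀ (j : Fin n), N (Fin.last n) j = -T (Fin.last n) j.castSucc := by
    intro j
    have : ∀ k : Fin n, ¬ (Fin.last n = Fin.castSucc k) := fun k =>
      (Fin.castSucc_lt_last k).ne'
    simp only [hNdef, Matrix.sub_apply, Matrix.mul_apply]
    simp [hf, this]
  -- bound the top block
  have hS0 : ∑ i : Fin n, ∑ j : Fin n,
      Complex.normSq ((T.submatrix Fin.castSucc Fin.castSucc - A₀) i j) ≤ 1 := by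
    rw [frob_sq] at hclose
    have hnn : (0:ℝ) ≤ ∑ i : Fin n, ∑ j : Fin n,
        Complex.normSq ((T.submatrix Fin.castSucc Fin.castSucc - A₀) i j) :=
      Finset.sum_nonneg fun i _ => Finset.sum_nonneg fun j _ => Complex.normSq_nonneg _
    nlinarith [Real.sq_sqrt hnn, Real.sqrt_nonneg (∑ i : Fin n, ∑ j : Fin n,
        Complex.normSq ((T.submatrix Fin.castSucc Fin.castSucc - A₀) i j))]
  -- bound the bottom row
  have hrow : ∑ j : Fin (n+1), Complex.normSq (T (Fin.last n) j) = 1 := by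
    have h := congrArg (fun M => M (Fin.last n) (Fin.last n)) h2
    simp only [Matrix.mul_apply, Matrix.conjTranspose_apply, Matrix.one_apply_eq] at h
    have h' : (∑ j : Fin (n+1), (Complex.normSq (T (Fin.last n) j) : ℂ)) = 1 := by
      rw [← h]
      refine Finset.sum_congr rfl fun j _ => ?_
      rw [mul_comm]
      exact (Complex.normSq_eq_conj_mul_self).symm ▸ rfl
    have := congrArg Complex.re h'
    simpa [Complex.re_sum] using this
  have hrow' : ∑ j : Fin n, Complex.normSq (T (Fin.last n) j.castSucc) ≤ 1 := by
    rw [← hrow]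
    rw [Fin.sum_univ_castSucc (f := fun j => Complex.normSq (T (Fin.last n) j))]
    have : (0:ℝ) ≤ Complex.normSq (T (Fin.last n) (Fin.last n)) := Complex.normSq_nonneg _
    linarith
  -- total sum
  have hsum : ∑ i : Fin (n+1), ∑ j : Fin n, Complex.normSq (N i j) ≤ 2 := by
    rw [Fin.sum_univ_castSucc (f := fun i => ∑ j : Fin n, Complex.normSq (N i j))]
    have e1 : ∑ i : Fin n, ∑ j : Fin n, Complex.normSq (N i.castSucc j)
        = ∑ i : Fin n, ∑ j : Fin n,
          Complex.normSq ((T.submatrix Fin.castSucc Fin.castSucc - A₀) i j) := by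
      refine Finset.sum_congr rfl fun i _ => Finset.sum_congr rfl fun j _ => ?_
      rw [hNc i j, Complex.normSq_neg]
    have e2 : ∑ j : Fin n, Complex.normSq (N (Fin.last n) j)
        = ∑ j : Fin n, Complex.normSq (T (Fin.last n) j.castSucc) := by
      refine Finset.sum_congr rfl fun j _ => ?_
      rw [hNl j, Complex.normSq_neg]
    rw [e1, e2]
    linarith
  calc Real.sqrt (∑ i, ∑ j, Complex.normSq (N i j)) ≤ Real.sqrt 4 := by
        apply Real.sqrt_le_sqrt; linarith
    _ = 2 := by
        rw [show (4:ℝ) = 2^2 by norm_num, Real.sqrt_sq (by norm_num)]
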